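/- Let k ∈ ℕ and α, β ∈ ℝ, and define f_k(r) = ∑_{i=0}^{k} r^{2i} for integers r. Then the identity (24 n⁴ β − 6 n² α) · f_k(n) = (6 n⁴ β − 6 n² α) · f_k(2n) holds for all integers n ≥ 1 if and only if one of the following holds: (k = 0 and β = 0), or (k = 1 and α + β = 0), or (α = 0 and β = 0). -/

import Mathlib

open Finset Polynomial

/-- The symmetry condition `(24n⁴β − 6n²α) f_k(n) = (6n⁴β − 6n²α) f_k(2n)` for all
`n ≥ 1` holds iff `(k = 0 ∧ β = 0)`, or `(k = 1 ∧ α + β = 0)`, or `(α = 0 ∧ β = 0)`. -/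
theorem symmetry_condition_iff (k : ℕ) (α β : ℝ) :
    (∀ n : ℤ, 1 ≤ n →
      (24 * (n : ℝ) ^ 4 * β - 6 * (n : ℝ) ^ 2 * α)
          * (∑ i ∈ Finset.range (k + 1), (n : ℝ) ^ (2 * i))
        = (6 * (n : ℝ) ^ 4 * β - 6 * (n : ℝ) ^ 2 * α)
          * (∑ i ∈ Finset.range (k + 1), ((2 * n : ℤ) : ℝ) ^ (2 * i)))
      ↔ ((k = 0 ∧ β = 0) ∨ (k = 1 ∧ α + β = 0) ∨ (α = 0 ∧ β = 0)) := by
  have key : ∀ n : ℤ, ∀ i : ℕ, ((2 * n : ℤ) : ℝ) ^ (2 * i) = 4 ^ i * (n : ℝ) ^ (2 * i) := by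
    intro n i
    push_cast
    rw [mul_pow, pow_mul]
    norm_num
  constructor
  · intro h
    rcases Nat.lt_or_ge k 2 with hk | hk
    · interval_cases k
      · left
        refine ⟨rfl, ?_⟩
        have h1 := h 1 (by norm_num)
        norm_num [Finset.sum_range_one] at h1
        linarith
      · right; left
        refine ⟨rfl, ?_⟩
        have h1 := h 1 (by norm_num)
        norm_num [Finset.sum_range_succ, Finset.sum_range_one] at h1
        linarith
    · right; right
      set P : Polynomial ℝ := ∑ i ∈ range (k+1),
        (C (24*β) * X^(2*i+4) - C (6*α) * X^(2*i+2)) with hP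
      set Q : Polynomial ℝ := ∑ i ∈ range (k+1),
        (C (6*β*4^i) * X^(2*i+4) - C (6*α*4^i) * X^(2*i+2)) with hQ
      have eP : ∀ x : ℝ, Polynomial.eval x P
          = (24 * x ^ 4 * β - 6 * x ^ 2 * α) * ∑ i ∈ range (k+1), x ^ (2*i) := by
        intro x
        rw [hP, Polynomial.eval_finset_sum, Finset.mul_sum]
        refine Finset.sum_congr rfl fun i _ => ?_
        simp [pow_add]
        ring
      have eQ : ∀ x : ℝ, Polynomial.eval x Q
          = (6 * x ^ 4 * β - 6 * x ^ 2 * α) * ∑ i ∈ range (k+1), (4:ℝ) ^ i * x ^ (2*i) := by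
        intro x
        rw [hQ, Polynomial.eval_finset_sum, Finset.mul_sum]
        refine Finset.sum_congr rfl fun i _ => ?_
        simp [pow_add]
        ring
      have hPQ : P = Q := by
        apply Polynomial.eq_of_infinite_eval_eq
        have hsub : (fun n : ℤ => (n:ℝ)) '' (Set.Ici 1) ⊆ {x | Polynomial.eval x P = Polynomial.eval x Q} := by
          rintro x ⟨n, hn, rfl⟩
          have hn' : (1:ℤ) ≤ n := hn
          have := h n hn'
          simp only [Set.mem_setOf_eq, eP, eQ]
          rw [show (∑ i ∈ range (k+1), ((2 * n : ℤ) : ℝ) ^ (2 * i))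
              = ∑ i ∈ range (k+1), (4:ℝ) ^ i * (n:ℝ) ^ (2*i) from
            Finset.sum_congr rfl fun i _ => key n i] at this
          exact this
        refine Set.Infinite.mono hsub ?_
        exact Set.Infinite.image (fun a _ b _ hab => by exact_mod_cast hab) (Set.Ici_infinite 1)
      have cP1 : P.coeff (2*k+4) = 24*β := by
        rw [hP, Polynomial.finset_sum_coeff]
        rw [Finset.sum_eq_single k]
        · simp only [Polynomial.coeff_sub, Polynomial.coeff_C_mul, Polynomial.coeff_X_pow]
          rw [if_neg (show ¬(2 * k + 4 = 2 * k + 2) by omega)]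
          simp
        · intro i hi hne
          rw [Finset.mem_range] at hi
          simp only [Polynomial.coeff_sub, Polynomial.coeff_C_mul, Polynomial.coeff_X_pow]
          rw [if_neg (by omega), if_neg (by omega)]
          ring
        · intro hmem
          exact absurd (Finset.self_mem_range_succ k) hmem
      have cQ1 : Q.coeff (2*k+4) = 6*β*4^k := by
        rw [hQ, Polynomial.finset_sum_coeff]
        rw [Finset.sum_eq_single k]
        · simp only [Polynomial.coeff_sub, Polynomial.coeff_C_mul, Polynomial.coeff_X_pow]
          rw [if_neg (show ¬(2 * k + 4 = 2 * k + 2) by omega)]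
          simp
        · intro i hi hne
          rw [Finset.mem_range] at hi
          simp only [Polynomial.coeff_sub, Polynomial.coeff_C_mul, Polynomial.coeff_X_pow]
          rw [if_neg (by omega), if_neg (by omega)]
          ring
        · intro hmem
          exact absurd (Finset.self_mem_range_succ k) hmem
      have c1 : (24:ℝ)*β = 6*β*4^k := by rw [← cP1, ← cQ1, hPQ]
      have h16 : (16:ℝ) ≤ 4^k := by
        calc (16:ℝ) = 4^2 := by norm_num
        _ ≤ 4^k := pow_le_pow_right₀ (by norm_num) hk
      have hβ : β = 0 := by nlinarith
      have cP2 : P.coeff (2*k+2) = 24*β - 6*α := by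
        rw [hP, Polynomial.finset_sum_coeff]
        simp only [Polynomial.coeff_sub, Polynomial.coeff_C_mul, Polynomial.coeff_X_pow]
        rw [Finset.sum_sub_distrib]
        rw [Finset.sum_eq_single (k-1), Finset.sum_eq_single k]
        · rw [if_pos (by omega), if_pos (by omega)]; ring
        · intro i hi hne
          rw [Finset.mem_range] at hi
          rw [if_neg (by omega)]; ring
        · intro hmem
          exact absurd (Finset.self_mem_range_succ k) hmem
        · intro i hi hne
          rw [Finset.mem_range] at hi
          rw [if_neg (by omega)]; ring
        · intro hmem
          exact absurd (Finset.mem_range_succ_iff.mpr (by omega)) hmem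
      have cQ2 : Q.coeff (2*k+2) = 6*β*4^(k-1) - 6*α*4^k := by
        rw [hQ, Polynomial.finset_sum_coeff]
        simp only [Polynomial.coeff_sub, Polynomial.coeff_C_mul, Polynomial.coeff_X_pow]
        rw [Finset.sum_sub_distrib]
        rw [Finset.sum_eq_single (k-1), Finset.sum_eq_single k]
        · rw [if_pos (by omega), if_pos (by omega)]; ring
        · intro i hi hne
          rw [Finset.mem_range] at hi
          rw [if_neg (by omega)]; ring
        · intro hmem
          exact absurd (Finset.self_mem_range_succ k) hmem
        · intro i hi hne
          rw [Finset.mem_range] at hi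
          rw [if_neg (by omega)]; ring
        · intro hmem
          exact absurd (Finset.mem_range_succ_iff.mpr (by omega)) hmem
      have c2 : (24:ℝ)*β - 6*α = 6*β*4^(k-1) - 6*α*4^k := by rw [← cP2, ← cQ2, hPQ]
      have hα : α = 0 := by
        rw [hβ] at c2
        nlinarith
      exact ⟨hα, hβ⟩
  · rintro (⟨rfl, rfl⟩ | ⟨rfl, hab⟩ | ⟨rfl, rfl⟩) n hn
    · norm_num [Finset.sum_range_one]
    · have hb : β = -α := by linarith
      subst hb
      norm_num [Finset.sum_range_succ, Finset.sum_range_one]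
      ring
    · norm_num
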